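/- Let n ≥ 1, let d = 2n and let s₁ = (−2, n+1) ∈ ℤ². Then for every i ∈ ℤ/2nℤ, the Kashiwara operator ẽ_i (defined with respect to d and the charge s₁) annihilates the bipartition 2^{n−1}.∅: ẽ_i(2^{n−1}.∅) = 0. -/

import Mathlib

open scoped Classical

noncomputable section

/-- A partition: an antitone, eventually zero sequence of natural numbers.
`parts k` is the `(k+1)`-st part `λ_{k+1}`. -/
structure NPartition where
  parts : ℕ → ℕ
  antitone' : Antitone parts
  exists_zero : ∃ N, parts N = 0

namespace NPartition

lemma sorted_getD_antitone {l : List ℕ} (h : l.Pairwise (· ≥ ·)) :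
    Antitone (fun k => l.getD k 0) := by
  intro i j hij
  simp only
  rcases lt_or_ge j l.length with hj | hj
  · have hi : i < l.length := lt_of_le_of_lt hij hj
    rw [List.getD_eq_getElem l 0 hj, List.getD_eq_getElem l 0 hi]
    rcases eq_or_lt_of_le hij with rfl | hlt
    · exact le_rfl
    · exact List.pairwise_iff_getElem.mp h i j hi hj hlt
  · rw [List.getD_eq_default l 0 hj]
    exact Nat.zero_le _

/-- The partition whose multiset of (nonzero) parts is the multiset of nonzero
elements of `m`. -/
def ofMul (m : Multiset ℕ) : NPartition where
  parts := fun k => ((m.sort (· ≤ ·)).reverse).getD k 0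
  antitone' := by
    apply sorted_getD_antitone
    rw [List.pairwise_reverse]
    exact Multiset.pairwise_sort (s := m) (r := (· ≤ ·))
  exists_zero := ⟨((m.sort (· ≤ ·)).reverse).length, List.getD_eq_default _ _ le_rfl⟩

/-- The size `|λ|` of a partition: the sum of its parts. -/
def size (p : NPartition) : ℕ := ∑ i ∈ Finset.range (Nat.find p.exists_zero), p.parts i

lemma finite_gt (p : NPartition) (k : ℕ) : {i : ℕ | k < p.parts i}.Finite := by
  obtain ⟨N, hN⟩ := p.exists_zero
  apply (Set.finite_Iio N).subset
  intro i hi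
  simp only [Set.mem_setOf_eq] at hi
  by_contra hc
  simp only [Set.mem_Iio, not_lt] at hc
  have := p.antitone' hc
  omega

/-- The conjugate (transpose) partition. -/
def conj (p : NPartition) : NPartition where
  parts := fun k => {i : ℕ | k < p.parts i}.ncard
  antitone' := fun a b hab =>
    Set.ncard_le_ncard (fun i hi => lt_of_le_of_lt hab hi) (p.finite_gt a)
  exists_zero := by
    refine ⟨p.parts 0, ?_⟩
    have h : {i : ℕ | p.parts 0 < p.parts i} = ∅ := by
      ext i
      simp only [Set.mem_setOf_eq, Set.mem_empty_iff_false, iff_false, not_lt]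
      exact p.antitone' (Nat.zero_le i)
    beta_reduce
    rw [h, Set.ncard_empty]

/-- The 180°-rotation of the complement of `p` inside the rectangle with
`rows` rows of length `c`: the partition `(c - p_rows, c - p_{rows-1}, …, c - p₁)`. -/
def rotCompl (c rows : ℕ) (p : NPartition) : NPartition where
  parts := fun k => if k < rows then c - p.parts (rows - 1 - k) else 0
  antitone' := by
    intro a b hab
    by_cases hb : b < rows
    · have ha : a < rows := lt_of_le_of_lt hab hb
      simp only [if_pos hb, if_pos ha]
      exact Nat.sub_le_sub_left (p.antitone' (by omega)) c
    · simp only [if_neg hb]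
      exact Nat.zero_le _
  exists_zero := ⟨rows, by simp⟩

end NPartition

/-- A bipartition: a pair of partitions. -/
abbrev Bipartition := NPartition × NPartition

/-- The size of a bipartition. -/
def Bipartition.size (l : Bipartition) : ℕ := l.1.size + l.2.size

/-- The bipartition whose components have parts the multisets `a` and `b`. -/
def bip (a b : Multiset ℕ) : Bipartition := (NPartition.ofMul a, NPartition.ofMul b)

/-- The multiset of parts of the partition `a 1^b` (one part `a`, then `b` parts `1`). -/
def hook (a b : ℕ) : Multiset ℕ := a ::ₘ Multiset.replicate b 1

/-- The charged β-set of a partition, as a sequence: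
`betaSet p s i = λ_{i+1} + s - (i+1) + 1`. -/
def betaSet (p : NPartition) (s : ℤ) (i : ℕ) : ℤ := (p.parts i : ℤ) + s - i

/-- The charged symbol of a bipartition with charge `σ`, as a pair of subsets of `ℤ`. -/
def symbolOf (l : Bipartition) (σ : ℤ × ℤ) : Set ℤ × Set ℤ :=
  (Set.range (betaSet l.1 σ.1), Set.range (betaSet l.2 σ.2))

/-- The charge `σ_t`. -/
def sigmaT (t : ℕ) : ℤ × ℤ :=
  if Even t then ((t : ℤ), -1 - (t : ℤ)) else (-1 - (t : ℤ), (t : ℤ))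

/-- The trivial symbol `({0,-1,-2,…},{-1,-2,-3,…})`, the symbol of the empty
bipartition with charge `σ₀ = (0,-1)`. -/
def trivialSymbol : Set ℤ × Set ℤ := ({z : ℤ | z ≤ 0}, {z : ℤ | z ≤ -1})

/-- Removing one `n`-co-hook from the symbol `Λ`, yielding `Λ'`: remove `x+n` from one
row, adjoin `x` to the other row, and exchange the two rows. -/
def CohookStep (n : ℕ) (Λ Λ' : Set ℤ × Set ℤ) : Prop :=
  (∃ x : ℤ, x + n ∈ Λ.1 ∧ x ∉ Λ.2 ∧ Λ' = (Λ.2 ∪ {x}, Λ.1 \ {x + n})) ∨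
  (∃ x : ℤ, x + n ∈ Λ.2 ∧ x ∉ Λ.1 ∧ Λ' = (Λ.2 \ {x + n}, Λ.1 ∪ {x}))

/-- `C` is the `n`-co-core of `Λ`: it is obtained from `Λ` by recursively removing
`n`-co-hooks, and no further `n`-co-hook can be removed. -/
def IsCocore (n : ℕ) (Λ C : Set ℤ × Set ℤ) : Prop :=
  Relation.ReflTransGen (CohookStep n) Λ C ∧ ∀ C', ¬ CohookStep n C C'

/-- Number of entries of the charged β-set of `p` that are `≥ α` (with multiplicity). -/
def betaCountGE (p : NPartition) (s α : ℤ) : ℕ := Nat.card {i : ℕ // α ≤ betaSet p s i}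

/-- Number of entries `≥ α`, with multiplicity, of the multiset union of the two rows
of the symbol of `l` with charge `σ`. -/
def symCountGE (l : Bipartition) (σ : ℤ × ℤ) (α : ℤ) : ℕ :=
  betaCountGE l.1 σ.1 α + betaCountGE l.2 σ.2 α

/-- The composition `ϖ_Λ` of the symbol of `l` with charge `σ`: `comp l σ k` is the
`(k+1)`-st largest entry (with multiplicity) of the multiset union of the two rows. -/
def comp (l : Bipartition) (σ : ℤ × ℤ) (k : ℕ) : ℤ :=
  sSup {z : ℤ | k + 1 ≤ symCountGE l σ z}

/-- All partial sums of the composition of the symbol `(l,σ)` are bounded by those of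
`(m,τ)`. -/
def DomLE (l : Bipartition) (σ : ℤ × ℤ) (m : Bipartition) (τ : ℤ × ℤ) : Prop :=
  ∀ j : ℕ, ∑ k ∈ Finset.range j, comp l σ k ≤ ∑ k ∈ Finset.range j, comp m τ k

/-- Strict dominance `Λ ⊲ Λ'` of symbols: the compositions differ and all partial sums
of the first are bounded by those of the second. -/
def DomLT (l : Bipartition) (σ : ℤ × ℤ) (m : Bipartition) (τ : ℤ × ℤ) : Prop :=
  comp l σ ≠ comp m τ ∧ DomLE l σ m τ

/-- A box `(x, y, j)` (0-indexed row `x`, 0-indexed column `y`, component `j`: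
`j = 0` is the first component, `j = 1` the second). -/
abbrev Box := ℕ × ℕ × Fin 2

/-- The component of a bipartition selected by `j : Fin 2`. -/
def Bipartition.partsOf (l : Bipartition) (j : Fin 2) : NPartition := if j = 0 then l.1 else l.2

/-- Membership of a box in the Young diagram of a bipartition. -/
def MemY (l : Bipartition) (b : Box) : Prop := b.2.1 < (l.partsOf b.2.2).parts b.1

/-- The entry of the charge `σ` corresponding to component `j`. -/
def chargeOf (σ : ℤ × ℤ) (j : Fin 2) : ℤ := if j = 0 then σ.1 else σ.2

/-- The charged content `co^σ(b) = y - x + σ_j` of a box. -/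
def content (σ : ℤ × ℤ) (b : Box) : ℤ := (b.2.1 : ℤ) - (b.1 : ℤ) + chargeOf σ b.2.2

/-- `j(b) ∈ {1,2}`: the component of a box, numbered 1 or 2. -/
def jval (b : Box) : ℕ := (b.2.2 : ℕ) + 1

/-- The counting function of the Dunkl–Griffeth order. -/
def dgCount (l : Bipartition) (s : ℤ × ℤ) (d : ℕ) (α : ℝ) (j : ℕ) : ℕ :=
  Nat.card {b : Box // MemY l b ∧
    (α < (content s b : ℝ) - (jval b : ℝ) * (d : ℝ) / 2 ∨
      ((content s b : ℝ) - (jval b : ℝ) * (d : ℝ) / 2 = α ∧ jval b ≤ j))}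

/-- The Dunkl–Griffeth order `λ ⪯_s μ` (with respect to `d`). -/
def DGLE (l m : Bipartition) (s : ℤ × ℤ) (d : ℕ) : Prop :=
  ∀ (α : ℝ), ∀ j ∈ ({1, 2} : Set ℕ), dgCount l s d α j ≤ dgCount m s d α j

/-- A box of the extended Young diagram: rows are infinite to the left, so the column
coordinate is an integer.  `(x, y, j)` is the box in (0-indexed) row `x`, with integer
column coordinate `y` (`y = 0` is the first column), in component `j`. -/
abbrev ExtBox := ℕ × ℤ × Fin 2

/-- Membership in the extended Young diagram of a bipartition. -/
def MemExtY (l : Bipartition) (b : ExtBox) : Prop :=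
  b.2.1 < ((l.partsOf b.2.2).parts b.1 : ℤ)

/-- The charged content of an extended box. -/
def contentExt (σ : ℤ × ℤ) (b : ExtBox) : ℤ := b.2.1 - (b.1 : ℤ) + chargeOf σ b.2.2

/-- `b` is a removable box of the bipartition `l`. -/
def Removable (l : Bipartition) (b : Box) : Prop :=
  (l.partsOf b.2.2).parts b.1 = b.2.1 + 1 ∧ (l.partsOf b.2.2).parts (b.1 + 1) ≤ b.2.1

/-- `b` is an addable box of the bipartition `l`. -/
def Addable (l : Bipartition) (b : Box) : Prop :=
  (l.partsOf b.2.2).parts b.1 = b.2.1 ∧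
    (b.1 = 0 ∨ b.2.1 + 1 ≤ (l.partsOf b.2.2).parts (b.1 - 1))

/-- The order in which boxes are listed in the `i`-word: increasing charged content,
a component-2 box preceding a component-1 box of equal charged content. -/
def BoxLT (σ : ℤ × ℤ) (b b' : Box) : Prop :=
  content σ b < content σ b' ∨
    (content σ b = content σ b' ∧ b.2.2 = 1 ∧ b'.2.2 = 0)

/-- `L` is the list of boxes underlying the `i`-word of `(l, σ)` with respect to `d`:
it lists, in increasing order, exactly the addable and removable boxes of `l` whose
charged content is congruent to `i` modulo `d`. -/
def IsIWord (l : Bipartition) (σ : ℤ × ℤ) (d : ℕ) (i : ZMod d) (L : List Box) : Prop :=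
  L.Pairwise (BoxLT σ) ∧
    ∀ b : Box, b ∈ L ↔ ((Addable l b ∨ Removable l b) ∧ ((content σ b : ZMod d) = i))

/-- The sign of a box in the `i`-word: `true` (`+`) for addable, `false` (`−`) for
removable boxes. -/
def signOf (l : Bipartition) (b : Box) : Bool := if Addable l b then true else false

/-- One reduction step on words: delete an adjacent pair `−+`. -/
def RedStep (w w' : List Bool) : Prop :=
  ∃ u v : List Bool, w = u ++ false :: true :: v ∧ w' = u ++ v

/-- `ẽ_i l = 0`: the reduced `i`-word of `(l, σ)` contains no `−`, i.e. the `i`-word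
reduces to a word consisting only of `+`'s. -/
def AnnihilatedE (l : Bipartition) (σ : ℤ × ℤ) (d : ℕ) (i : ZMod d) : Prop :=
  ∃ L : List Box, IsIWord l σ d i L ∧
    ∃ a : ℕ, Relation.ReflTransGen RedStep (L.map (signOf l)) (List.replicate a true)

/-- `q` is obtained from the partition `p` by adding one box. -/
def PCovers (p q : NPartition) : Prop :=
  ∃ x : ℕ, q.parts x = p.parts x + 1 ∧ ∀ y : ℕ, y ≠ x → q.parts y = p.parts y

/-- `m` is obtained from the bipartition `l` by adding one box to its Young diagram. -/
def BipCovers (l m : Bipartition) : Prop :=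
  (PCovers l.1 m.1 ∧ m.2 = l.2) ∨ (m.1 = l.1 ∧ PCovers l.2 m.2)

/-- `A(l) = Σ_μ μ`, the sum over all bipartitions obtained from `l` by adding one box,
as an element of the group of `ℤ`-valued functions on bipartitions. -/
def addB (l : Bipartition) : Bipartition → ℤ := fun m => if BipCovers l m then 1 else 0

/-- The projection `π_S` onto the span of the bipartitions lying in `S`. -/
def projS (S : Set Bipartition) (f : Bipartition → ℤ) : Bipartition → ℤ :=
  fun m => if m ∈ S then f m else 0

/-- The basis element of `ℤ[BP]` corresponding to a bipartition. -/
def deltaB (l : Bipartition) : Bipartition → ℤ := fun m => if m = l then 1 else 0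

/-- The bipartitions of `2n` labelling the principal-series unipotent characters in
the principal `Φ_{2n}`-block. -/
def PS (n : ℕ) : Set Bipartition :=
  {l | (∃ i j : ℕ, 0 < i ∧ i < n ∧ j ≤ n ∧
          l = bip (hook (n - i) j) (hook (n - j + 1) (i - 1))) ∨
       (∃ j : ℕ, j < 2 * n ∧ l = bip (hook (2 * n - j) j) 0) ∨
       (∃ i : ℕ, 0 < i ∧ i ≤ 2 * n ∧ l = bip 0 (hook (2 * n - i + 1) (i - 1)))}

/-- The bipartitions of `2n-2` labelling the `B₂`-series unipotent characters in the
principal `Φ_{2n}`-block: `2^i 1^{j-i-1} . (n-i-1)(n-j)` for `0 ≤ i < j ≤ n`. -/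
def LB2 (n : ℕ) : Set Bipartition :=
  {l | ∃ i j : ℕ, i < j ∧ j ≤ n ∧
        l = bip (Multiset.replicate i 2 + Multiset.replicate (j - i - 1) 1)
                {n - i - 1, n - j}}

/-- The bipartitions of `2n-6` labelling the `B₆`-series unipotent characters in the
principal `Φ_{2n}`-block: `(n-i-2)(n-j-1) . 2^{i-1} 1^{j-i-1}` for `0 < i < j < n`. -/
def LB6 (n : ℕ) : Set Bipartition :=
  {l | ∃ i j : ℕ, 0 < i ∧ i < j ∧ j < n ∧
        l = bip {n - i - 2, n - j - 1}
                (Multiset.replicate (i - 1) 2 + Multiset.replicate (j - i - 1) 1)}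

end

section Stmt10Aux

lemma parts_ofMul_replicate (r k : ℕ) :
    (NPartition.ofMul (Multiset.replicate r 2)).parts k = if k < r then 2 else 0 := by
  have hs : (Multiset.replicate r 2).sort (· ≤ ·) = List.replicate r 2 := by
    refine List.eq_replicate_iff.mpr ⟨?_, ?_⟩
    · rw [Multiset.length_sort, Multiset.card_replicate]
    · intro b hb
      exact Multiset.eq_of_mem_replicate ((Multiset.mem_sort _).mp hb)
  show ((Multiset.replicate r 2).sort (· ≤ ·)).reverse.getD k 0 = _
  rw [hs, List.reverse_replicate]
  rcases lt_or_ge k r with h | h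
  · rw [List.getD_eq_getElem _ _ (by simpa using h), if_pos h, List.getElem_replicate]
  · rw [List.getD_eq_default _ _ (by simpa using h), if_neg (not_lt.mpr h)]

lemma partsOf0 (r : ℕ) : (bip (Multiset.replicate r 2) 0).partsOf (0 : Fin 2)
    = NPartition.ofMul (Multiset.replicate r 2) := rfl

lemma partsOf1 (r : ℕ) : (bip (Multiset.replicate r 2) 0).partsOf (1 : Fin 2)
    = NPartition.ofMul 0 := rfl

lemma parts_ofMul_zero (k : ℕ) : (NPartition.ofMul (0 : Multiset ℕ)).parts k = 0 := by
  show (((0 : Multiset ℕ).sort (· ≤ ·)).reverse).getD k 0 = 0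
  rw [Multiset.sort_zero]
  rfl

lemma addrem0 (r x y : ℕ) :
    (Addable (bip (Multiset.replicate r 2) 0) (x, y, 0) ∨
      Removable (bip (Multiset.replicate r 2) 0) (x, y, 0)) ↔
    ((r ≠ 0 ∧ x = 0 ∧ y = 2) ∨ (x = r ∧ y = 0) ∨ (r ≠ 0 ∧ x = r - 1 ∧ y = 1)) := by
  simp only [Addable, Removable, partsOf0, parts_ofMul_replicate]
  split_ifs <;> first | omega | (simp only [false_and, or_false, false_or, and_false]; omega)

lemma addrem1 (r x y : ℕ) :
    (Addable (bip (Multiset.replicate r 2) 0) (x, y, 1) ∨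
      Removable (bip (Multiset.replicate r 2) 0) (x, y, 1)) ↔ (x = 0 ∧ y = 0) := by
  simp only [Addable, Removable, partsOf1, parts_ofMul_zero]
  first | omega | (simp only [false_and, or_false, false_or, and_false]; omega)

lemma addable_row (r : ℕ) : Addable (bip (Multiset.replicate r 2) 0) (r, 0, 0) := by
  constructor
  · rw [partsOf0, parts_ofMul_replicate]; simp
  · rcases Nat.eq_zero_or_pos r with h | h
    · exact Or.inl h
    · right; rw [partsOf0, parts_ofMul_replicate, if_pos (Nat.sub_lt h Nat.one_pos)]; simp

lemma addable_02 (r : ℕ) (hr : r ≠ 0) : Addable (bip (Multiset.replicate r 2) 0) (0, 2, 0) := by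
  constructor
  · rw [partsOf0, parts_ofMul_replicate, if_pos (by omega)]
  · exact Or.inl rfl

lemma addable_001 (r : ℕ) : Addable (bip (Multiset.replicate r 2) 0) (0, 0, 1) := by
  constructor
  · rw [partsOf1, parts_ofMul_zero]
  · exact Or.inl rfl

lemma removable_r (r : ℕ) (hr : r ≠ 0) :
    Removable (bip (Multiset.replicate r 2) 0) (r - 1, 1, 0) := by
  constructor
  · rw [partsOf0, parts_ofMul_replicate, if_pos (by omega)]
  · rw [partsOf0, parts_ofMul_replicate, if_neg (by omega)]; omega

lemma not_addable_of_removable (l : Bipartition) (b : Box) (h : Removable l b) :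
    ¬ Addable l b := by
  intro ha
  have h1 := h.1
  have h2 := ha.1
  omega

lemma zmod_eq_of_dvd (N : ℕ) (a b : ℤ) (h : (N : ℤ) ∣ b - a) :
    ((a : ZMod N) = (b : ZMod N)) :=
  (ZMod.intCast_eq_intCast_iff _ _ _).mpr (Int.modEq_iff_dvd.mpr h)

lemma zmod_ne_of (N : ℕ) (a b : ℤ) (h0 : b - a ≠ 0) (h : (b - a).natAbs < N) :
    ((a : ZMod N) ≠ (b : ZMod N)) := by
  intro hc
  have hd : (N : ℤ) ∣ b - a := ((ZMod.intCast_eq_intCast_iff _ _ _).mp hc).dvd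
  exact h0 (Int.eq_zero_of_dvd_of_natAbs_lt_natAbs hd (by simpa using h))

lemma zmod_ne_special (n : ℕ) (hn : 2 ≤ n) (a b : ℤ) (hab : b - a = 2 * n + 2) :
    ((a : ZMod (2 * n)) ≠ (b : ZMod (2 * n))) := by
  intro hc
  have hd : ((2 * n : ℕ) : ℤ) ∣ b - a := ((ZMod.intCast_eq_intCast_iff _ _ _).mp hc).dvd
  have hd2 : ((2 * n : ℕ) : ℤ) ∣ 2 := by
    have h2 := dvd_sub hd (dvd_refl ((2 * n : ℕ) : ℤ))
    have he : b - a - ((2 * n : ℕ) : ℤ) = 2 := by push_cast at hab ⊢; omega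
    rwa [he] at h2
  have h3 := Int.eq_zero_of_dvd_of_natAbs_lt_natAbs hd2 (by simp; omega)
  norm_num at h3

lemma annihilated_of_empty (l : Bipartition) (σ : ℤ × ℤ) (d : ℕ) (i : ZMod d)
    (hmem : ∀ b : Box, (Addable l b ∨ Removable l b) → ((content σ b : ZMod d) ≠ i)) :
    AnnihilatedE l σ d i := by
  refine ⟨[], ⟨List.Pairwise.nil, ?_⟩, 0, Relation.ReflTransGen.refl⟩
  intro b
  simp only [List.not_mem_nil, false_iff]
  rintro ⟨h1, h2⟩
  exact hmem b h1 h2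

lemma annihilated_of_single (l : Bipartition) (σ : ℤ × ℤ) (d : ℕ) (i : ZMod d) (b : Box)
    (hA : Addable l b) (hcb : (content σ b : ZMod d) = i)
    (hmem : ∀ b' : Box, (Addable l b' ∨ Removable l b') → ((content σ b' : ZMod d) = i) →
      b' = b) :
    AnnihilatedE l σ d i := by
  refine ⟨[b], ⟨List.pairwise_singleton _ _, ?_⟩, 1, ?_⟩
  · intro b'
    simp only [List.mem_singleton]
    constructor
    · rintro rfl; exact ⟨Or.inl hA, hcb⟩
    · rintro ⟨h1, h2⟩; exact hmem b' h1 h2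
  · have hmap : List.map (signOf l) [b] = [true] := by simp [signOf, hA]
    rw [hmap]
    exact Relation.ReflTransGen.refl

lemma annihilated_of_pair (l : Bipartition) (σ : ℤ × ℤ) (d : ℕ) (i : ZMod d) (bR bA : Box)
    (hR : Removable l bR) (hA : Addable l bA) (hlt : BoxLT σ bR bA)
    (hcR : (content σ bR : ZMod d) = i) (hcA : (content σ bA : ZMod d) = i)
    (hmem : ∀ b' : Box, (Addable l b' ∨ Removable l b') → ((content σ b' : ZMod d) = i) →
      b' = bR ∨ b' = bA) :
    AnnihilatedE l σ d i := by
  refine ⟨[bR, bA], ⟨?_, ?_⟩, 0, ?_⟩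
  · refine List.pairwise_cons.mpr ⟨?_, List.pairwise_singleton _ _⟩
    intro b hb
    rw [List.mem_singleton] at hb
    subst hb
    exact hlt
  · intro b'
    simp only [List.mem_cons, List.mem_singleton, List.not_mem_nil, or_false]
    constructor
    · rintro (rfl | rfl)
      exacts [⟨Or.inr hR, hcR⟩, ⟨Or.inl hA, hcA⟩]
    · rintro ⟨h1, h2⟩; exact hmem b' h1 h2
  · have hmap : List.map (signOf l) [bR, bA] = [false, true] := by
      simp [signOf, hA, not_addable_of_removable l bR hR]
    rw [hmap]
    exact Relation.ReflTransGen.single ⟨[], [], rfl, rfl⟩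

lemma annihilated_of_pair_add (l : Bipartition) (σ : ℤ × ℤ) (d : ℕ) (i : ZMod d)
    (b1 b2 : Box)
    (hA1 : Addable l b1) (hA2 : Addable l b2) (hlt : BoxLT σ b1 b2)
    (hc1 : (content σ b1 : ZMod d) = i) (hc2 : (content σ b2 : ZMod d) = i)
    (hmem : ∀ b' : Box, (Addable l b' ∨ Removable l b') → ((content σ b' : ZMod d) = i) →
      b' = b1 ∨ b' = b2) :
    AnnihilatedE l σ d i := by
  refine ⟨[b1, b2], ⟨?_, ?_⟩, 2, ?_⟩
  · refine List.pairwise_cons.mpr ⟨?_, List.pairwise_singleton _ _⟩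
    intro b hb
    rw [List.mem_singleton] at hb
    subst hb
    exact hlt
  · intro b'
    simp only [List.mem_cons, List.mem_singleton, List.not_mem_nil, or_false]
    constructor
    · rintro (rfl | rfl)
      exacts [⟨Or.inl hA1, hc1⟩, ⟨Or.inl hA2, hc2⟩]
    · rintro ⟨h1, h2⟩; exact hmem b' h1 h2
  · have hmap : List.map (signOf l) [b1, b2] = [true, true] := by
      simp [signOf, hA1, hA2]
    rw [hmap]
    exact Relation.ReflTransGen.refl

end Stmt10Aux

/-- With `d = 2n` and charge `s₁ = (-2, n+1)`, every Kashiwara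
operator `ẽ_i` annihilates the bipartition `2^{n-1}.∅`. -/
theorem decomposition_numbers_stmt10 (n : ℕ) (hn : 1 ≤ n) (i : ZMod (2 * n)) :
    AnnihilatedE (bip (Multiset.replicate (n - 1) 2) 0) (-2, (n : ℤ) + 1) (2 * n) i := by
  have hc0 : ∀ x y : ℕ,
      content (-2, (n : ℤ) + 1) (x, y, (0 : Fin 2)) = (y : ℤ) - (x : ℤ) - 2 := by
    intro x y
    simp [content, chargeOf]
    try omega
  have hc1 : ∀ x y : ℕ,
      content (-2, (n : ℤ) + 1) (x, y, (1 : Fin 2)) = (y : ℤ) - (x : ℤ) + ((n : ℤ) + 1) := by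
    intro x y
    simp [content, chargeOf]
    try omega
  rcases Nat.lt_or_ge n 2 with hn2 | hn2
  · -- n = 1
    have hn1 : n = 1 := by omega
    subst hn1
    by_cases hi : i = (((-2 : ℤ)) : ZMod (2 * 1))
    · refine annihilated_of_pair_add _ _ _ _ (0, 0, (0 : Fin 2)) (0, 0, (1 : Fin 2))
        (addable_row (1 - 1)) (addable_001 (1 - 1)) ?_ ?_ ?_ ?_
      · left
        rw [hc0, hc1]
        norm_num
      · rw [hc0, hi]
        norm_num
      · rw [hc1, hi]
        apply zmod_eq_of_dvd
        norm_num
      · intro b' hb hcast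
        obtain ⟨x, y, j⟩ := b'
        fin_cases j <;> simp only [Fin.mk_zero, Fin.mk_one] at hb hcast ⊢
        · rcases (addrem0 (1 - 1) x y).mp hb with ⟨h0, _, _⟩ | ⟨hx, hy⟩ | ⟨h0, _, _⟩
          · exact absurd rfl h0
          · subst hx hy
            left
            rfl
          · exact absurd rfl h0
        · obtain ⟨hx, hy⟩ := (addrem1 (1 - 1) x y).mp hb
          subst hx hy
          right
          rfl
    · apply annihilated_of_empty
      intro b hb
      obtain ⟨x, y, j⟩ := b
      fin_cases j <;> simp only [Fin.mk_zero, Fin.mk_one] at hb ⊢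
      · rcases (addrem0 (1 - 1) x y).mp hb with ⟨h0, _, _⟩ | ⟨hx, hy⟩ | ⟨h0, _, _⟩
        · exact absurd rfl h0
        · subst hx hy
          intro hc
          rw [hc0] at hc
          apply hi
          rw [← hc]
          norm_num
        · exact absurd rfl h0
      · obtain ⟨hx, hy⟩ := (addrem1 (1 - 1) x y).mp hb
        subst hx hy
        intro hc
        rw [hc1] at hc
        apply hi
        rw [← hc]
        apply zmod_eq_of_dvd
        norm_num
  · -- n ≥ 2
    by_cases hi0 : i = ((0 : ℤ) : ZMod (2 * n))
    · refine annihilated_of_single _ _ _ _ (0, 2, (0 : Fin 2))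
        (addable_02 (n - 1) (by omega)) ?_ ?_
      · rw [hc0, hi0]
        norm_num
      · intro b' hb hcast
        obtain ⟨x, y, j⟩ := b'
        fin_cases j <;> simp only [Fin.mk_zero, Fin.mk_one] at hb hcast ⊢
        · rcases (addrem0 (n - 1) x y).mp hb with ⟨_, hx, hy⟩ | ⟨hx, hy⟩ | ⟨_, hx, hy⟩
          · subst hx hy
            rfl
          · exfalso
            subst hx hy
            rw [hc0, hi0] at hcast
            refine (zmod_ne_of (2 * n) _ 0 ?_ ?_) hcast <;> omega
          · exfalso
            subst hx hy
            rw [hc0, hi0] at hcast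
            refine (zmod_ne_of (2 * n) _ 0 ?_ ?_) hcast <;> omega
        · obtain ⟨hx, hy⟩ := (addrem1 (n - 1) x y).mp hb
          exfalso
          subst hx hy
          rw [hc1, hi0] at hcast
          refine (zmod_ne_of (2 * n) _ 0 ?_ ?_) hcast <;> omega
    · by_cases hiA2 : i = (((-(n : ℤ) - 1) : ℤ) : ZMod (2 * n))
      · refine annihilated_of_single _ _ _ _ (n - 1, 0, (0 : Fin 2))
          (addable_row (n - 1)) ?_ ?_
        · rw [hc0, hiA2]
          apply zmod_eq_of_dvd
          exact ⟨0, by omega⟩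
        · intro b' hb hcast
          obtain ⟨x, y, j⟩ := b'
          fin_cases j <;> simp only [Fin.mk_zero, Fin.mk_one] at hb hcast ⊢
          · rcases (addrem0 (n - 1) x y).mp hb with ⟨_, hx, hy⟩ | ⟨hx, hy⟩ | ⟨_, hx, hy⟩
            · exfalso
              subst hx hy
              rw [hc0, hiA2] at hcast
              refine (zmod_ne_of (2 * n) _ _ ?_ ?_) hcast <;> omega
            · subst hx hy
              rfl
            · exfalso
              subst hx hy
              rw [hc0, hiA2] at hcast
              refine (zmod_ne_of (2 * n) _ _ ?_ ?_) hcast <;> omega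
          · obtain ⟨hx, hy⟩ := (addrem1 (n - 1) x y).mp hb
            exfalso
            subst hx hy
            rw [hc1, hiA2] at hcast
            refine (zmod_ne_special n hn2 _ _ ?_) hcast.symm
            omega
      · by_cases hiA3 : i = ((((n : ℤ) + 1) : ℤ) : ZMod (2 * n))
        · refine annihilated_of_pair _ _ _ _ (n - 1 - 1, 1, (0 : Fin 2)) (0, 0, (1 : Fin 2))
            (removable_r (n - 1) (by omega)) (addable_001 (n - 1)) ?_ ?_ ?_ ?_
          · left
            rw [hc0, hc1]
            omega
          · rw [hc0, hiA3]
            apply zmod_eq_of_dvd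
            exact ⟨1, by omega⟩
          · rw [hc1, hiA3]
            apply zmod_eq_of_dvd
            exact ⟨0, by omega⟩
          · intro b' hb hcast
            obtain ⟨x, y, j⟩ := b'
            fin_cases j <;> simp only [Fin.mk_zero, Fin.mk_one] at hb hcast ⊢
            · rcases (addrem0 (n - 1) x y).mp hb with ⟨_, hx, hy⟩ | ⟨hx, hy⟩ | ⟨_, hx, hy⟩
              · exfalso
                subst hx hy
                rw [hc0, hiA3] at hcast
                refine (zmod_ne_of (2 * n) _ _ ?_ ?_) hcast <;> omega
              · exfalso
                subst hx hy
                rw [hc0, hiA3] at hcast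
                refine (zmod_ne_special n hn2 _ _ ?_) hcast
                omega
              · subst hx hy
                left
                rfl
            · obtain ⟨hx, hy⟩ := (addrem1 (n - 1) x y).mp hb
              subst hx hy
              right
              rfl
        · apply annihilated_of_empty
          intro b hb
          obtain ⟨x, y, j⟩ := b
          fin_cases j <;> simp only [Fin.mk_zero, Fin.mk_one] at hb ⊢
          · rcases (addrem0 (n - 1) x y).mp hb with ⟨_, hx, hy⟩ | ⟨hx, hy⟩ | ⟨_, hx, hy⟩
            · subst hx hy
              intro hc
              rw [hc0] at hc
              apply hi0
              rw [← hc]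
              norm_num
            · subst hx hy
              intro hc
              rw [hc0] at hc
              apply hiA2
              rw [← hc]
              apply zmod_eq_of_dvd
              exact ⟨0, by omega⟩
            · subst hx hy
              intro hc
              rw [hc0] at hc
              apply hiA3
              rw [← hc]
              apply zmod_eq_of_dvd
              exact ⟨1, by omega⟩
          · obtain ⟨hx, hy⟩ := (addrem1 (n - 1) x y).mp hb
            subst hx hy
            intro hc
            rw [hc1] at hc
            apply hiA3
            rw [← hc]
            apply zmod_eq_of_dvd
            exact ⟨0, by omega⟩
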